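/- Let (X, A, d) be a C*-algebra-valued metric space with A = M₂(ℝ) and define F_{p,q}(C) = tr(C)/(tr(C + d(p,q))) for C a positive definite matrix. Then for all p, q, r ∈ X and positive matrices A, B: F_{p,q}(A+B) ≥ min(F_{p,r}(A), F_{r,q}(B)). -/

import Mathlib

open Matrix

lemma psd_trace_nonneg (M : Matrix (Fin 2) (Fin 2) ℝ) (h : M.PosSemidef) :
    0 ≤ M.trace := by
  have hd : ∀ i, 0 ≤ M i i := by
    intro i
    exact h.diag_nonneg
  have : M.trace = M 0 0 + M 1 1 := by
    simp [Matrix.trace, Matrix.diag, Fin.sum_univ_two]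
  rw [this]; linarith [hd 0, hd 1]

lemma pd_trace_pos (M : Matrix (Fin 2) (Fin 2) ℝ) (h : M.PosDef) :
    0 < M.trace := by
  have h0 : 0 < M 0 0 := by
    exact h.diag_pos
  have h1 : 0 ≤ M 1 1 := by
    exact h.posSemidef.diag_nonneg
  have : M.trace = M 0 0 + M 1 1 := by
    simp [Matrix.trace, Matrix.diag, Fin.sum_univ_two]
  linarith

/-- Triangle property for the probabilistic metric
`F_{p,q}(C) = tr C / tr (C + d(p,q))` with the minimum t-norm, on a
C*-algebra-valued metric space `(X, M₂(ℝ), d)`. -/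
theorem prob_metric_trace_min_triangle {X : Type*}
    (d : X → X → Matrix (Fin 2) (Fin 2) ℝ)
    (hpos : ∀ p q, (d p q).PosSemidef)
    (hzero : ∀ p q, d p q = 0 ↔ p = q)
    (hsymm : ∀ p q, d p q = d q p)
    (htri : ∀ p q r, (d p r + d r q - d p q).PosSemidef)
    (F : X → X → Matrix (Fin 2) (Fin 2) ℝ → ℝ)
    (hF : ∀ p q C, F p q C = (Matrix.trace C) / (Matrix.trace (C + d p q)))
    (p q r : X) (A B : Matrix (Fin 2) (Fin 2) ℝ)
    (hA : A.PosDef) (hB : B.PosDef) :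
    min (F p r A) (F r q B) ≤ F p q (A + B) := by
  set a := A.trace with ha
  set b := B.trace with hb
  set x := (d p r).trace with hx
  set y := (d r q).trace with hy
  set z := (d p q).trace with hz
  have hapos : 0 < a := pd_trace_pos A hA
  have hbpos : 0 < b := pd_trace_pos B hB
  have hx0 : 0 ≤ x := psd_trace_nonneg _ (hpos p r)
  have hy0 : 0 ≤ y := psd_trace_nonneg _ (hpos r q)
  have hz0 : 0 ≤ z := psd_trace_nonneg _ (hpos p q)
  have htr : z ≤ x + y := by
    have := psd_trace_nonneg _ (htri p q r)
    simp only [Matrix.trace_sub, Matrix.trace_add] at this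
    linarith
  have e1 : F p r A = a / (a + x) := by rw [hF]; simp [Matrix.trace_add]; rfl
  have e2 : F r q B = b / (b + y) := by rw [hF]; simp [Matrix.trace_add]; rfl
  have e3 : F p q (A + B) = (a + b) / (a + b + z) := by
    rw [hF]; simp [Matrix.trace_add]; rfl
  rw [e1, e2, e3]
  rcases le_total (a * y) (b * x) with h | h
  · refine le_trans (min_le_left _ _) ?_
    rw [div_le_div_iff₀ (by linarith) (by linarith)]
    nlinarith
  · refine le_trans (min_le_right _ _) ?_
    rw [div_le_div_iff₀ (by linarith) (by linarith)]
    nlinarith
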